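/- Let γ > 0 and let Φ denote the standard normal cumulative distribution function, Φ(z) = ∫_{−∞}^{z} (2π)^{−1/2} exp(−t²/2) dt. Let μ be a probability measure on ℝ² whose cumulative distribution function on the positive quadrant is the bivariate Hüsler–Reiss distribution: for all x > 0, y > 0, μ((−∞, x] × (−∞, y]) = exp(−(1/x)·Φ(√γ/2 + (1/√γ)·log(y/x)) − (1/y)·Φ(√γ/2 + (1/√γ)·log(x/y))), and μ puts no mass outside (0,∞)². Then lim_{t→∞} t · μ((t, ∞) × (t, ∞)) = 2·(1 − Φ(√γ/2)). -/

import Mathlib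

open MeasureTheory Filter

/-- The standard normal cumulative distribution function. -/
noncomputable def stdNormalCDF (z : ℝ) : ℝ :=
  ∫ t in Set.Iic z, (Real.sqrt (2 * Real.pi))⁻¹ * Real.exp (-(t ^ 2) / 2)

lemma gauss_eq : (fun t : ℝ => (Real.sqrt (2 * Real.pi))⁻¹ * Real.exp (-(t ^ 2) / 2))
    = fun t : ℝ => (Real.sqrt (2 * Real.pi))⁻¹ * Real.exp (-(1/2) * t ^ 2) := by
  funext t; congr 2; ring

lemma gauss_int : Integrable (fun t : ℝ => (Real.sqrt (2 * Real.pi))⁻¹ * Real.exp (-(t ^ 2) / 2)) := by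
  rw [gauss_eq]
  exact (integrable_exp_neg_mul_sq (by norm_num : (0:ℝ) < 1/2)).const_mul _

lemma gauss_total : ∫ t : ℝ, (Real.sqrt (2 * Real.pi))⁻¹ * Real.exp (-(t ^ 2) / 2) = 1 := by
  rw [gauss_eq]
  rw [integral_const_mul, integral_gaussian]
  have h2 : (Real.pi / (1/2)) = 2 * Real.pi := by ring
  rw [h2]
  rw [inv_mul_cancel₀]
  positivity

lemma stdNormalCDF_nonneg (z : ℝ) : 0 ≤ stdNormalCDF z := by
  apply setIntegral_nonneg measurableSet_Iic
  intro t _; positivity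

lemma stdNormalCDF_le_one (z : ℝ) : stdNormalCDF z ≤ 1 := by
  rw [← gauss_total]
  exact setIntegral_le_integral gauss_int (Filter.Eventually.of_forall fun t => by positivity)

lemma stdNormalCDF_tendsto : Tendsto stdNormalCDF atTop (nhds 1) := by
  have h := tendsto_setIntegral_of_monotone (μ := volume)
    (f := fun t : ℝ => (Real.sqrt (2 * Real.pi))⁻¹ * Real.exp (-(t ^ 2) / 2))
    (s := fun z : ℝ => Set.Iic z) (fun _ => measurableSet_Iic)
    (fun a b hab => Set.Iic_subset_Iic.2 hab) ?_
  · have hu : (⋃ z : ℝ, Set.Iic z) = Set.univ := Set.iUnion_Iic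
    rw [hu, Measure.restrict_univ, gauss_total] at h
    exact h
  · rw [Set.iUnion_Iic]
    exact gauss_int.integrableOn

lemma limit_aux (a : ℝ) :
    Tendsto (fun t : ℝ => t * (1 - Real.exp (-(a / t)))) atTop (nhds a) := by
  set g : ℝ → ℝ := fun s => 1 - Real.exp (-(a * s)) with hg
  have hd : HasDerivAt g a 0 := by
    have h1 : HasDerivAt (fun s : ℝ => a * s) a 0 := by
      simpa using (hasDerivAt_id (0:ℝ)).const_mul a
    have h2 := (h1.neg).exp
    have h3 := h2.const_sub 1
    simpa [g] using h3
  have hs := hasDerivAt_iff_tendsto_slope.mp hd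
  have ht : Tendsto (fun t : ℝ => 1 / t) atTop (nhdsWithin (0:ℝ) {(0:ℝ)}ᶜ) := by
    apply tendsto_nhdsWithin_of_tendsto_nhds_of_eventually_within
    · simpa using tendsto_inv_atTop_zero
    · filter_upwards [eventually_gt_atTop (0:ℝ)] with t ht
      simp [one_div, ht.ne']
  have := hs.comp ht
  apply this.congr'
  filter_upwards [eventually_gt_atTop (0:ℝ)] with t ht
  have ht0 : t ≠ 0 := ht.ne'
  simp only [Function.comp, slope_def_field, g]
  field_simp
  simp only [mul_zero, neg_zero, Real.exp_zero]
  ring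

/-- The bivariate Hüsler–Reiss distribution with dependence parameter `γ > 0` has
upper tail dependence coefficient `λ = 2 (1 - Φ(√γ / 2))`. -/
theorem huslerReiss_tail_dependence
    (γ : ℝ) (hγ : 0 < γ) (μ : Measure (ℝ × ℝ)) [IsProbabilityMeasure μ]
    (hcdf : ∀ x y : ℝ, 0 < x → 0 < y →
      μ (Set.Iic x ×ˢ Set.Iic y) = ENNReal.ofReal (Real.exp
        (-(1 / x) * stdNormalCDF (Real.sqrt γ / 2 + (1 / Real.sqrt γ) * Real.log (y / x))
          - (1 / y) * stdNormalCDF (Real.sqrt γ / 2 + (1 / Real.sqrt γ) * Real.log (x / y)))))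
    (hsupp : μ {p : ℝ × ℝ | ¬ (0 < p.1 ∧ 0 < p.2)} = 0) :
    Tendsto (fun t : ℝ => t * (μ (Set.Ioi t ×ˢ Set.Ioi t)).toReal)
      atTop (nhds (2 * (1 - stdNormalCDF (Real.sqrt γ / 2)))) := by
  have hγ' : (0:ℝ) < Real.sqrt γ := Real.sqrt_pos.2 hγ
  set c := stdNormalCDF (Real.sqrt γ / 2) with hc
  -- argument to stdNormalCDF tends to atTop
  have harg : ∀ x : ℝ, 0 < x → Tendsto
      (fun n : ℕ => Real.sqrt γ / 2 + (1 / Real.sqrt γ) * Real.log ((n:ℝ) / x)) atTop atTop := by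
    intro x hx
    apply tendsto_atTop_add_const_left
    apply Tendsto.const_mul_atTop (by positivity : (0:ℝ) < 1 / Real.sqrt γ)
    exact Real.tendsto_log_atTop.comp ((tendsto_natCast_atTop_atTop).atTop_div_const hx)
  -- the small term tends to 0
  have hsmall : ∀ x : ℝ, 0 < x → Tendsto
      (fun n : ℕ => (1 / (n:ℝ)) * stdNormalCDF (Real.sqrt γ / 2 + (1 / Real.sqrt γ) * Real.log (x / (n:ℝ)))) atTop (nhds 0) := by
    intro x hx
    apply squeeze_zero (fun n => mul_nonneg (by positivity) (stdNormalCDF_nonneg _)) (g := fun n : ℕ => 1 / (n:ℝ))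
    · intro n
      calc (1 / (n:ℝ)) * stdNormalCDF _ ≤ (1 / (n:ℝ)) * 1 :=
            mul_le_mul_of_nonneg_left (stdNormalCDF_le_one _) (by positivity)
        _ = 1 / (n:ℝ) := mul_one _
    · exact tendsto_one_div_atTop_nhds_zero_nat
  -- marginals
  have hm1 : ∀ x : ℝ, 0 < x → μ (Set.Iic x ×ˢ (Set.univ : Set ℝ))
      = ENNReal.ofReal (Real.exp (-(1/x))) := by
    intro x hx
    have hmono : Monotone (fun n : ℕ => Set.Iic x ×ˢ Set.Iic (n:ℝ)) := fun a b hab =>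
      Set.prod_mono le_rfl (Set.Iic_subset_Iic.2 (Nat.cast_le.2 hab))
    have hU : (⋃ n : ℕ, Set.Iic x ×ˢ Set.Iic (n:ℝ)) = Set.Iic x ×ˢ (Set.univ : Set ℝ) := by
      rw [← Set.prod_iUnion]
      congr 1
      ext b
      simp only [Set.mem_iUnion, Set.mem_Iic, Set.mem_univ, iff_true]
      exact ⟨⌈b⌉₊, Nat.le_ceil b⟩
    have h1 : Tendsto (fun n : ℕ => μ (Set.Iic x ×ˢ Set.Iic (n:ℝ))) atTop
        (nhds (μ (Set.Iic x ×ˢ (Set.univ : Set ℝ)))) := by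
      rw [← hU]; exact tendsto_measure_iUnion_atTop hmono
    have hg : Tendsto (fun n : ℕ =>
        -(1/x) * stdNormalCDF (Real.sqrt γ / 2 + (1 / Real.sqrt γ) * Real.log ((n:ℝ) / x))
          - (1/(n:ℝ)) * stdNormalCDF (Real.sqrt γ / 2 + (1 / Real.sqrt γ) * Real.log (x / (n:ℝ))))
        atTop (nhds (-(1/x))) := by
      have t1 : Tendsto (fun n : ℕ =>
          -(1/x) * stdNormalCDF (Real.sqrt γ / 2 + (1 / Real.sqrt γ) * Real.log ((n:ℝ) / x)))
          atTop (nhds (-(1/x) * 1)) :=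
        ((stdNormalCDF_tendsto.comp (harg x hx)).const_mul _)
      simpa using t1.sub (hsmall x hx)
    have h2 : Tendsto (fun n : ℕ => μ (Set.Iic x ×ˢ Set.Iic (n:ℝ))) atTop
        (nhds (ENNReal.ofReal (Real.exp (-(1/x))))) := by
      have := (ENNReal.continuous_ofReal.tendsto _).comp ((Real.continuous_exp.tendsto _).comp hg)
      apply this.congr'
      filter_upwards [eventually_ge_atTop 1] with n hn
      have hn' : (0:ℝ) < (n:ℝ) := by exact_mod_cast hn
      rw [hcdf x n hx hn']; rfl
    exact tendsto_nhds_unique h1 h2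
  have hm2 : ∀ y : ℝ, 0 < y → μ ((Set.univ : Set ℝ) ×ˢ Set.Iic y)
      = ENNReal.ofReal (Real.exp (-(1/y))) := by
    intro y hy
    have hmono : Monotone (fun n : ℕ => Set.Iic (n:ℝ) ×ˢ Set.Iic y) := fun a b hab =>
      Set.prod_mono (Set.Iic_subset_Iic.2 (Nat.cast_le.2 hab)) le_rfl
    have hU : (⋃ n : ℕ, Set.Iic (n:ℝ) ×ˢ Set.Iic y) = (Set.univ : Set ℝ) ×ˢ Set.Iic y := by
      rw [← Set.iUnion_prod_const]
      congr 1
      ext b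
      simp only [Set.mem_iUnion, Set.mem_Iic, Set.mem_univ, iff_true]
      exact ⟨⌈b⌉₊, Nat.le_ceil b⟩
    have h1 : Tendsto (fun n : ℕ => μ (Set.Iic (n:ℝ) ×ˢ Set.Iic y)) atTop
        (nhds (μ ((Set.univ : Set ℝ) ×ˢ Set.Iic y))) := by
      rw [← hU]; exact tendsto_measure_iUnion_atTop hmono
    have hg : Tendsto (fun n : ℕ =>
        -(1/(n:ℝ)) * stdNormalCDF (Real.sqrt γ / 2 + (1 / Real.sqrt γ) * Real.log (y / (n:ℝ)))
          - (1/y) * stdNormalCDF (Real.sqrt γ / 2 + (1 / Real.sqrt γ) * Real.log ((n:ℝ) / y)))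
        atTop (nhds (-(1/y))) := by
      have t1 : Tendsto (fun n : ℕ =>
          (1/y) * stdNormalCDF (Real.sqrt γ / 2 + (1 / Real.sqrt γ) * Real.log ((n:ℝ) / y)))
          atTop (nhds ((1/y) * 1)) :=
        ((stdNormalCDF_tendsto.comp (harg y hy)).const_mul _)
      have t2 : Tendsto (fun n : ℕ =>
          -((1/(n:ℝ)) * stdNormalCDF (Real.sqrt γ / 2 + (1 / Real.sqrt γ) * Real.log (y / (n:ℝ)))))
          atTop (nhds (-0)) := (hsmall y hy).neg
      have := t2.sub t1
      simp only [neg_zero, zero_sub] at this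
      convert this using 2 with n
      · ring
      · rw [mul_one]
    have h2 : Tendsto (fun n : ℕ => μ (Set.Iic (n:ℝ) ×ˢ Set.Iic y)) atTop
        (nhds (ENNReal.ofReal (Real.exp (-(1/y))))) := by
      have := (ENNReal.continuous_ofReal.tendsto _).comp ((Real.continuous_exp.tendsto _).comp hg)
      apply this.congr'
      filter_upwards [eventually_ge_atTop 1] with n hn
      have hn' : (0:ℝ) < (n:ℝ) := by exact_mod_cast hn
      rw [hcdf n y hn' hy]; rfl
    exact tendsto_nhds_unique h1 h2
  -- key computation
  have key : ∀ t : ℝ, 0 < t → (μ (Set.Ioi t ×ˢ Set.Ioi t)).toReal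
      = 1 - 2 * Real.exp (-(1/t)) + Real.exp (-((2*c)/t)) := by
    intro t ht
    set A := Set.Iic t ×ˢ (Set.univ : Set ℝ) with hA
    set B := (Set.univ : Set ℝ) ×ˢ Set.Iic t with hB
    have hmA : MeasurableSet A := measurableSet_Iic.prod MeasurableSet.univ
    have hmB : MeasurableSet B := MeasurableSet.univ.prod measurableSet_Iic
    have hABc : A ∪ B = (Set.Ioi t ×ˢ Set.Ioi t)ᶜ := by
      ext ⟨a, b⟩
      simp only [hA, hB, Set.mem_union, Set.mem_prod, Set.mem_Iic, Set.mem_univ, Set.mem_compl_iff,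
        Set.mem_Ioi, not_and_or, not_lt, and_true, true_and]
    have hABi : A ∩ B = Set.Iic t ×ˢ Set.Iic t := by
      rw [hA, hB, Set.prod_inter_prod, Set.inter_univ, Set.univ_inter]
    have hμA : (μ A).toReal = Real.exp (-(1/t)) := by
      rw [hm1 t ht, ENNReal.toReal_ofReal (Real.exp_nonneg _)]
    have hμB : (μ B).toReal = Real.exp (-(1/t)) := by
      rw [hm2 t ht, ENNReal.toReal_ofReal (Real.exp_nonneg _)]
    have hμI : (μ (A ∩ B)).toReal = Real.exp (-((2*c)/t)) := by
      rw [hABi, hcdf t t ht ht]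
      rw [div_self ht.ne', Real.log_one, mul_zero, add_zero]
      rw [ENNReal.toReal_ofReal (Real.exp_nonneg _)]
      congr 1
      rw [← hc]
      ring
    have hcompl : (μ (Set.Ioi t ×ˢ Set.Ioi t)).toReal = 1 - (μ (A ∪ B)).toReal := by
      have h1 : μ (Set.Ioi t ×ˢ Set.Ioi t) = 1 - μ (A ∪ B) := by
        rw [← compl_compl (Set.Ioi t ×ˢ Set.Ioi t), ← hABc]
        exact prob_compl_eq_one_sub (hmA.union hmB)
      rw [h1, ENNReal.toReal_sub_of_le prob_le_one ENNReal.one_ne_top, ENNReal.toReal_one]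
    have hincl : (μ (A ∪ B)).toReal + (μ (A ∩ B)).toReal = (μ A).toReal + (μ B).toReal := by
      have := measure_union_add_inter (μ := μ) A hmB
      have h2 := congrArg ENNReal.toReal this
      rwa [ENNReal.toReal_add (measure_ne_top μ _) (measure_ne_top μ _),
        ENNReal.toReal_add (measure_ne_top μ _) (measure_ne_top μ _)] at h2
    rw [hcompl]
    rw [hμA, hμB] at hincl
    rw [hμI] at hincl
    linarith
  -- final limit
  have hL1 := limit_aux 1
  have hL2 := limit_aux (2*c)
  have hcomb : Tendsto (fun t : ℝ =>
      2 * (t * (1 - Real.exp (-(1/t)))) - t * (1 - Real.exp (-((2*c)/t)))) atTop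
      (nhds (2 * 1 - 2*c)) := (hL1.const_mul 2).sub hL2
  have hval : (2 : ℝ) * 1 - 2*c = 2 * (1 - c) := by ring
  rw [hval] at hcomb
  apply hcomb.congr'
  filter_upwards [eventually_gt_atTop (0:ℝ)] with t ht
  rw [key t ht]
  ring
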